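/- For all Y, Z ∈ (0, π/2) with Y + Z ≤ π/2, one has (Y · cos Y / sin Y) · (Z · cos Z / sin Z) > (Y + Z) · cos(Y + Z) / sin(Y + Z). -/
import Mathlib

open Real

lemma aux_xcot (x : ℝ) (hx : 0 < x) (hx2 : x < π / 2) :
    (1 - x ^ 2) * Real.sin x < x * Real.cos x := by
  have hs : Real.sin x < x := Real.sin_lt hx
  have hspos : 0 < Real.sin x :=
    Real.sin_pos_of_pos_of_lt_pi hx (by nlinarith [Real.pi_gt_three])
  have hc : 0 < Real.cos x := Real.cos_pos_of_mem_Ioo ⟨by linarith, hx2⟩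
  have hcos : 1 - x ^ 2 / 2 ≤ Real.cos x := Real.one_sub_sq_div_two_le_cos
  rcases le_or_gt 1 x with h | h
  · nlinarith
  · nlinarith

lemma aux_xcos_le_sin (w : ℝ) (hw : 0 < w) (hw2 : w ≤ π / 2) :
    w * Real.cos w ≤ Real.sin w := by
  rcases lt_or_eq_of_le hw2 with h | h
  · have hc : 0 < Real.cos w := Real.cos_pos_of_mem_Ioo ⟨by linarith, h⟩
    have ht := Real.lt_tan hw h
    rw [Real.tan_eq_sin_div_cos, lt_div_iff₀ hc] at ht
    linarith
  · simp [h]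

/-- Inequality `(5_s)` of Nazarov–Petrov: for `Y, Z ∈ (0, π/2)` with `Y + Z ≤ π/2`, one has
`(Y·cot Y)·(Z·cot Z) > (Y + Z)·cot(Y + Z)`. -/
theorem xcot_superadditive (Y Z : ℝ)
    (hY : Y ∈ Set.Ioo 0 (π / 2)) (hZ : Z ∈ Set.Ioo 0 (π / 2)) (hsum : Y + Z ≤ π / 2) :
    (Y * Real.cos Y / Real.sin Y) * (Z * Real.cos Z / Real.sin Z) >
      (Y + Z) * Real.cos (Y + Z) / Real.sin (Y + Z) := by
  obtain ⟨hY0, hY2⟩ := hY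
  obtain ⟨hZ0, hZ2⟩ := hZ
  have hpi : (0:ℝ) < π := Real.pi_pos
  have hsY : 0 < Real.sin Y := Real.sin_pos_of_pos_of_lt_pi hY0 (by linarith)
  have hsZ : 0 < Real.sin Z := Real.sin_pos_of_pos_of_lt_pi hZ0 (by linarith)
  have hcY : 0 < Real.cos Y := Real.cos_pos_of_mem_Ioo ⟨by linarith, hY2⟩
  have hcZ : 0 < Real.cos Z := Real.cos_pos_of_mem_Ioo ⟨by linarith, hZ2⟩
  have hS : 0 < Real.sin (Y + Z) :=
    Real.sin_pos_of_pos_of_lt_pi (by linarith) (by linarith)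
  have hC : 0 ≤ Real.cos (Y + Z) := Real.cos_nonneg_of_mem_Icc ⟨by linarith, hsum⟩
  have hCS : (Y + Z) * Real.cos (Y + Z) ≤ Real.sin (Y + Z) :=
    aux_xcos_le_sin (Y + Z) (by linarith) hsum
  have h1 : (1 - Y ^ 2) * Real.sin Y < Y * Real.cos Y := aux_xcot Y hY0 hY2
  have h2 : (1 - Z ^ 2) * Real.sin Z < Z * Real.cos Z := aux_xcot Z hZ0 hZ2
  have hSadd : Real.sin (Y + Z) = Real.sin Y * Real.cos Z + Real.cos Y * Real.sin Z :=
    Real.sin_add Y Z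
  have hCadd : Real.cos (Y + Z) = Real.cos Y * Real.cos Z - Real.sin Y * Real.sin Z :=
    Real.cos_add Y Z
  -- key inequality (I)
  have hI : ((Y + Z) - Y * Z * (Y + Z)) * (Real.sin Y * Real.sin Z)
      < Y * Z * Real.sin (Y + Z) := by
    have e1 := mul_lt_mul_of_pos_right h1 (mul_pos hZ0 hsZ)
    have e2 := mul_lt_mul_of_pos_right h2 (mul_pos hY0 hsY)
    rw [hSadd]; nlinarith
  rw [gt_iff_lt, div_mul_div_comm, div_lt_div_iff₀ hS (by positivity)]
  -- goal: (Y+Z) * cos(Y+Z) * (sin Y * sin Z) < Y*cos Y*(Z*cos Z) * sin(Y+Z)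
  have key : Real.cos (Y + Z) * ((Y + Z) * (Real.sin Y * Real.sin Z)
      - Y * Z * Real.sin (Y + Z))
      < Y * Z * (Real.sin Y * Real.sin Z) * Real.sin (Y + Z) := by
    set B := (Y + Z) * (Real.sin Y * Real.sin Z) - Y * Z * Real.sin (Y + Z) with hB
    have hBlt : B < Y * Z * (Y + Z) * (Real.sin Y * Real.sin Z) := by
      rw [hB]; nlinarith
    rcases le_or_gt B 0 with hB0 | hB0
    · have : Real.cos (Y + Z) * B ≤ 0 := mul_nonpos_of_nonneg_of_nonpos hC hB0
      nlinarith [mul_pos (mul_pos (mul_pos hY0 hZ0) (mul_pos hsY hsZ)) hS]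
    · have e3 : (Y + Z) * Real.cos (Y + Z) * B ≤ Real.sin (Y + Z) * B :=
        mul_le_mul_of_nonneg_right hCS hB0.le
      have e4 : Real.sin (Y + Z) * B
          < Real.sin (Y + Z) * (Y * Z * (Y + Z) * (Real.sin Y * Real.sin Z)) :=
        mul_lt_mul_of_pos_left hBlt hS
      have hYZ : 0 < Y + Z := by linarith
      nlinarith
  have hid : Y * Real.cos Y * (Z * Real.cos Z) * Real.sin (Y + Z)
      = Y * Z * (Real.cos (Y + Z) + Real.sin Y * Real.sin Z) * Real.sin (Y + Z) := by
    rw [hCadd]; ring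
  rw [hid]; nlinarith [key]
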